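/- Let k be a commutative ring, R an associative unital k-algebra, H a nonempty finite set, and L the k-algebra of all maps H → R with pointwise operations. If L is separable with an idempotent Frobenius system, then R is separable with an idempotent Frobenius system. (Equivalently: if R is not separable with an idempotent Frobenius system, then neither is L.) -/

import Mathlib

open scoped TensorProduct

noncomputable section

/-- For `φ : A →ₗ[k] k` and `a : A`, the `k`-linear map `A ⊗[k] A → A` sending
`Σ e⁽¹⁾ ⊗ e⁽²⁾` to `Σ φ(a e⁽¹⁾) e⁽²⁾`. -/
def frobL (k A : Type*) [CommRing k] [Ring A] [Algebra k A]
    (φ : A →ₗ[k] k) (a : A) : A ⊗[k] A →ₗ[k] A :=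
  TensorProduct.lift (LinearMap.mk₂ k (fun x y => φ (a * x) • y)
    (fun x x' y => by simp [mul_add, add_smul])
    (fun c x y => by simp [Algebra.mul_smul_comm, mul_smul])
    (fun x y y' => by simp [smul_add])
    (fun c x y => by simp [smul_comm c]))

/-- For `φ : A →ₗ[k] k` and `a : A`, the `k`-linear map `A ⊗[k] A → A` sending
`Σ e⁽¹⁾ ⊗ e⁽²⁾` to `Σ e⁽¹⁾ φ(e⁽²⁾ a)`. -/
def frobR (k A : Type*) [CommRing k] [Ring A] [Algebra k A]
    (φ : A →ₗ[k] k) (a : A) : A ⊗[k] A →ₗ[k] A :=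
  TensorProduct.lift (LinearMap.mk₂ k (fun x y => φ (y * a) • x)
    (fun x x' y => by simp [smul_add])
    (fun c x y => by simp [smul_comm c])
    (fun x y y' => by simp [add_mul, add_smul])
    (fun c x y => by simp [Algebra.smul_mul_assoc, mul_smul]))

/-- A `k`-algebra `A` is separable with an idempotent Frobenius system iff there exist a
`k`-linear map `φ : A → k` and `e = Σ e⁽¹⁾ ⊗ e⁽²⁾ ∈ A ⊗[k] A` such that
`a = Σ φ(a e⁽¹⁾) e⁽²⁾ = Σ e⁽¹⁾ φ(e⁽²⁾ a)` for all `a ∈ A`, and `Σ e⁽¹⁾ e⁽²⁾ = 1`. -/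
def SepIdemFrob (k A : Type*) [CommRing k] [Ring A] [Algebra k A] : Prop :=
  ∃ (φ : A →ₗ[k] k) (e : A ⊗[k] A),
    (∀ a : A, frobL k A φ a e = a) ∧ (∀ a : A, frobR k A φ a e = a) ∧
    LinearMap.mul' k A e = 1

/-- If the algebra `L = M_H(R)` of maps from a nonempty finite set `H` to `R` is separable
with an idempotent Frobenius system, then so is `R`. -/
theorem sepIdemFrob_of_pi (k R H : Type*) [CommRing k] [Ring R] [Algebra k R]
    [Fintype H] [Nonempty H] (h : SepIdemFrob k (H → R)) : SepIdemFrob k R := by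
  obtain ⟨φ, e, hL, hR, hmul⟩ := h
  obtain ⟨h0⟩ := ‹Nonempty H›
  classical
  let π : (H → R) →ₗ[k] R := LinearMap.proj h0
  let ι : R →ₗ[k] (H → R) := LinearMap.single k (fun _ => R) h0
  have key1 : ∀ (r : R) (f : H → R), ι (r * f h0) = ι r * f := by
    intro r f
    funext j
    simp only [ι, LinearMap.single_apply, Pi.mul_apply, Pi.single_apply]
    split_ifs with hj
    · subst hj; rfl
    · rw [zero_mul]
  have key2 : ∀ (r : R) (f : H → R), ι (f h0 * r) = f * ι r := by
    intro r f
    funext j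
    simp only [ι, LinearMap.single_apply, Pi.mul_apply, Pi.single_apply]
    split_ifs with hj
    · subst hj; rfl
    · rw [mul_zero]
  refine ⟨φ.comp ι, TensorProduct.map π π e, ?_, ?_, ?_⟩
  · intro a
    have comp : (frobL k R (φ.comp ι) a).comp (TensorProduct.map π π)
        = π.comp (frobL k (H → R) φ (ι a)) := by
      apply TensorProduct.ext'
      intro x y
      simp only [LinearMap.comp_apply, TensorProduct.map_tmul, frobL,
        TensorProduct.lift.tmul, LinearMap.mk₂_apply, LinearMap.map_smul]
      simp only [π, LinearMap.proj_apply]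
      congr 1
      rw [key1 a x]
    have := congrArg (fun g : (H → R) ⊗[k] (H → R) →ₗ[k] R => g e) comp
    simp only [LinearMap.comp_apply] at this
    rw [this, hL (ι a)]
    simp [π, ι]
  · intro a
    have comp : (frobR k R (φ.comp ι) a).comp (TensorProduct.map π π)
        = π.comp (frobR k (H → R) φ (ι a)) := by
      apply TensorProduct.ext'
      intro x y
      simp only [LinearMap.comp_apply, TensorProduct.map_tmul, frobR,
        TensorProduct.lift.tmul, LinearMap.mk₂_apply, LinearMap.map_smul]
      simp only [π, LinearMap.proj_apply]
      congr 1
      rw [key2 a y]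
    have := congrArg (fun g : (H → R) ⊗[k] (H → R) →ₗ[k] R => g e) comp
    simp only [LinearMap.comp_apply] at this
    rw [this, hR (ι a)]
    simp [π, ι]
  · have comp : (LinearMap.mul' k R).comp (TensorProduct.map π π)
        = π.comp (LinearMap.mul' k (H → R)) := by
      apply TensorProduct.ext'
      intro x y
      simp [π]
    have := congrArg (fun g : (H → R) ⊗[k] (H → R) →ₗ[k] R => g e) comp
    simpa [hmul, π] using this

end
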